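/- Let A = {n(n−1)/2 : n ∈ ℕ} ⊆ ℤ be the set of triangular numbers. Then for any pairwise distinct natural numbers n, m, k the intersection (2^n + A) ∩ (2^m + A) ∩ (2^k + A) is empty; consequently pack_3(A) ≥ ℵ0, i.e., the set B = {2^m : m ∈ ℕ} is infinite and witnesses that the family {b + A}_{b ∈ B} is 3-disjoint. -/

import Mathlib

/-- The set of triangular numbers `{n(n-1)/2 : n ∈ ℕ}` as a subset of `ℤ`. -/
def TriangularSet : Set ℤ := {a : ℤ | ∃ n : ℕ, a = ((n * (n - 1)) / 2 : ℕ)}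

lemma tri_sq {t : ℤ} (ht : t ∈ TriangularSet) :
    ∃ b : ℤ, 0 ≤ b ∧ 8 * t + 1 = (2 * b + 1) ^ 2 := by
  obtain ⟨r, rfl⟩ := ht
  cases r with
  | zero => exact ⟨0, le_refl 0, by norm_num⟩
  | succ r =>
    refine ⟨(r : ℤ), by positivity, ?_⟩
    have h2 : ((r + 1) * (r + 1 - 1) / 2 : ℕ) * 2 = (r + 1) * r := by
      rw [Nat.div_mul_cancel]
      · simp
      · simpa [Nat.mul_comm] using (Nat.even_mul_succ_self r).two_dvd
    have h3 : (((r + 1) * (r + 1 - 1) / 2 : ℕ) : ℤ) * 2 = ((r : ℤ) + 1) * r := by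
      exact_mod_cast congrArg (Nat.cast : ℕ → ℤ) h2
    nlinarith [h3]

lemma key (x : ℤ) (n m k : ℕ) (hnm : n < m) (hmk : m < k)
    (h1 : x - 2 ^ n ∈ TriangularSet) (h2 : x - 2 ^ m ∈ TriangularSet)
    (h3 : x - 2 ^ k ∈ TriangularSet) : False := by
  obtain ⟨a, ha0, ha⟩ := tri_sq h1
  obtain ⟨b, hb0, hb⟩ := tri_sq h2
  obtain ⟨c, hc0, hc⟩ := tri_sq h3
  -- basic power facts
  have hpn : (1 : ℤ) ≤ 2 ^ n := by exact_mod_cast Nat.one_le_two_pow (n := n)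
  have hpm : (2 : ℤ) ^ n < 2 ^ m := by
    exact pow_lt_pow_right₀ (by norm_num) hnm
  have hpk : (2 : ℤ) ^ m < 2 ^ k := by
    exact pow_lt_pow_right₀ (by norm_num) hmk
  -- E1 : A^2 - B^2 = 8*(2^m - 2^n),  E2 : B^2 - C^2 = 8*(2^k - 2^m)
  have E1 : (2 * a + 1) ^ 2 - (2 * b + 1) ^ 2 = 8 * ((2:ℤ) ^ m - 2 ^ n) := by
    linarith [ha, hb]
  have E2 : (2 * b + 1) ^ 2 - (2 * c + 1) ^ 2 = 8 * ((2:ℤ) ^ k - 2 ^ m) := by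
    linarith [hb, hc]
  -- a > b and b > c
  have hab : b < a := by nlinarith
  have hbc : c < b := by nlinarith
  -- divisibility: 2^(m+1) ∣ (b - c) * (b + c + 1)
  have hdvd : (2:ℤ) ^ (m + 1) ∣ (b - c) * (b + c + 1) := by
    have hpq : (b - c) * (b + c + 1) = 2 * ((2:ℤ) ^ k - 2 ^ m) := by nlinarith [E2]
    have hk : (2:ℤ) ^ m * 2 ^ (k - m) = 2 ^ k := by
      rw [← pow_add]
      congr 1
      omega
    have : (2:ℤ) ^ k - 2 ^ m = 2 ^ m * (2 ^ (k - m) - 1) := by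
      rw [mul_sub, hk, mul_one]
    rw [hpq, this]
    exact ⟨2 ^ (k - m) - 1, by ring⟩
  -- one of b-c, b+c+1 is odd
  have hparity : Odd (b - c) ∨ Odd (b + c + 1) := by
    rcases Int.even_or_odd (b - c) with he | ho
    · right
      rcases Int.even_or_odd (b + c + 1) with he' | ho'
      · exfalso
        have : Even ((b - c) + (b + c + 1)) := he.add he'
        have h2b : (b - c) + (b + c + 1) = 2 * b + 1 := by ring
        rw [h2b] at this
        exact (Int.even_add_one.mp (by simpa [two_mul] using this)) (even_two_mul b)
      · exact ho'
    · left; exact ho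
  -- conclude b + c + 1 ≥ 2^(m+1) in either case, hence b ≥ 2^m
  have hbig : (2:ℤ) ^ (m + 1) ≤ b + c + 1 := by
    rcases hparity with ho | ho
    · -- b - c odd, so 2^(m+1) ∣ b + c + 1
      have hco : IsCoprime ((2:ℤ) ^ (m + 1)) (b - c) := by
        apply IsCoprime.pow_left
        rw [Int.prime_two.coprime_iff_not_dvd]
        rintro ⟨z, hz⟩
        obtain ⟨y, hy⟩ := ho
        omega
      have := hco.dvd_of_dvd_mul_left hdvd
      exact Int.le_of_dvd (by linarith) this
    · -- b + c + 1 odd, so 2^(m+1) ∣ b - c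
      have hco : IsCoprime ((2:ℤ) ^ (m + 1)) (b + c + 1) := by
        apply IsCoprime.pow_left
        rw [Int.prime_two.coprime_iff_not_dvd]
        rintro ⟨z, hz⟩
        obtain ⟨y, hy⟩ := ho
        omega
      have hd : (2:ℤ) ^ (m + 1) ∣ (b - c) := hco.dvd_of_dvd_mul_right hdvd
      have := Int.le_of_dvd (by linarith) hd
      linarith
  have hbge : (2:ℤ) ^ m ≤ b := by
    have h2 : (2:ℤ) ^ (m + 1) = 2 * 2 ^ m := by rw [pow_succ]; ring
    -- 2b + 1 ≥ (b+c+1) + (b-c) ≥ 2^(m+1) + 1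
    have : 1 ≤ b - c := by linarith
    linarith [hbig, h2]
  -- final contradiction
  have haB : b + 1 ≤ a := hab
  nlinarith [E1, hpn, hbge, haB, sq_nonneg (a - b - 1)]

/-- For the set `A` of triangular numbers in `ℤ` and pairwise distinct `n, m, k ∈ ℕ`, the
intersection `(2^n + A) ∩ (2^m + A) ∩ (2^k + A)` is empty; consequently `pack₃(A) ≥ ℵ₀`,
as witnessed by the infinite set `B = {2^m : m ∈ ℕ}` whose translates are `3`-disjoint. -/
theorem triangular_pack3_infinite :
    (∀ n m k : ℕ, n ≠ m → n ≠ k → m ≠ k →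
      ((fun a => (2 : ℤ) ^ n + a) '' TriangularSet) ∩
        ((fun a => (2 : ℤ) ^ m + a) '' TriangularSet) ∩
        ((fun a => (2 : ℤ) ^ k + a) '' TriangularSet) = ∅) ∧
    {x : ℤ | ∃ m : ℕ, x = 2 ^ m}.Infinite := by
  constructor
  · intro n m k hnm hnk hmk
    rw [Set.eq_empty_iff_forall_notMem]
    rintro x ⟨⟨⟨t1, ht1, he1⟩, ⟨t2, ht2, he2⟩⟩, ⟨t3, ht3, he3⟩⟩
    simp only at he1 he2 he3
    have h1 : x - 2 ^ n ∈ TriangularSet := by rw [← he1]; simpa using ht1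
    have h2 : x - 2 ^ m ∈ TriangularSet := by rw [← he2]; simpa using ht2
    have h3 : x - 2 ^ k ∈ TriangularSet := by rw [← he3]; simpa using ht3
    rcases hnm.lt_or_gt with h | h
    · rcases hmk.lt_or_gt with h' | h'
      · exact key x n m k h h' h1 h2 h3
      · rcases hnk.lt_or_gt with h'' | h''
        · exact key x n k m h'' h' h1 h3 h2
        · exact key x k n m h'' h h3 h1 h2
    · rcases hnk.lt_or_gt with h' | h'
      · exact key x m n k h h' h2 h1 h3
      · rcases hmk.lt_or_gt with h'' | h''
        · exact key x m k n h'' h' h2 h3 h1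
        · exact key x k m n h'' h h3 h2 h1
  · have hr : Set.range (fun m : ℕ => (2:ℤ) ^ m) = {x : ℤ | ∃ m : ℕ, x = 2 ^ m} := by
      ext y; simp [eq_comm]
    rw [← hr]
    apply Set.infinite_range_of_injective
    intro i j hij
    have h' : (2:ℤ) ^ i = 2 ^ j := hij
    exact Nat.pow_right_injective (le_refl 2) (by exact_mod_cast h')
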